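/- Let η ≪ λ. If (π₁,π₂) and (π₁′,π₂′) are pairs of stationary Markov policies with π_i(·|x)=π_i′(·|x) for λ-almost every x (i=1,2), then the occupation measures coincide: μ_{η,π₁,π₂} = μ_{η,π₁′,π₂′}. -/

import Mathlib

open MeasureTheory ProbabilityTheory
open scoped NNReal ENNReal

lemma bind_congr_ae' {α β : Type*} [MeasurableSpace α] [MeasurableSpace β]
    {m : Measure α} {f g : α → Measure β} (h : f =ᵐ[m] g) : m.bind f = m.bind g := by
  unfold Measure.bind
  rw [Measure.map_congr h]

lemma bind_ac' {α β : Type*} [MeasurableSpace α] [MeasurableSpace β]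
    {m : Measure α} {f : α → Measure β} (hf : Measurable f) {lam : Measure β}
    (h : ∀ x, f x ≪ lam) : m.bind f ≪ lam := by
  refine Measure.AbsolutelyContinuous.mk fun s hs h0 => ?_
  rw [Measure.bind_apply hs hf.aemeasurable]
  simp [fun x => h x h0]

lemma gstep_fun_measurable {X A₁ A₂ : Type*} [MeasurableSpace X] [MeasurableSpace A₁]
    [MeasurableSpace A₂] (Q : Kernel (X × A₁ × A₂) X) [IsMarkovKernel Q]
    (π₁ : Kernel X A₁) [IsMarkovKernel π₁] (π₂ : Kernel X A₂) [IsMarkovKernel π₂] :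
    Measurable fun x => ((π₁ ×ₖ π₂) x).bind fun a => Q (x, a) := by
  have : (fun x => ((π₁ ×ₖ π₂) x).bind fun a => Q (x, a))
      = fun x => (Q ∘ₖ (Kernel.id ×ₖ (π₁ ×ₖ π₂))) x := by
    funext x
    rw [Kernel.comp_apply, Kernel.prod_apply Kernel.id (π₁ ×ₖ π₂), Kernel.id_apply, Measure.dirac_prod]
    unfold Measure.bind
    rw [Measure.map_map Q.measurable measurable_prodMk_left]
    rfl
  rw [this]
  exact (Q ∘ₖ (Kernel.id ×ₖ (π₁ ×ₖ π₂))).measurable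

/-- One-step transition operator on measures for the pair of stationary Markov policies
`(π₁, π₂)`:  `γ ↦ γ Q_{π₁,π₂}` where `Q_{π₁,π₂}(D|x) = ∫ Q(D|x,a₁,a₂) π₁(da₁|x) π₂(da₂|x)`. -/
noncomputable def gstep {X A₁ A₂ : Type*} [MeasurableSpace X] [MeasurableSpace A₁]
    [MeasurableSpace A₂] (Q : Kernel (X × A₁ × A₂) X)
    (π₁ : Kernel X A₁) (π₂ : Kernel X A₂) (γ : Measure X) : Measure X :=
  γ.bind fun x => ((π₁ ×ₖ π₂) x).bind fun a => Q (x, a)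

/-- The `X`-marginal of the occupation measure of the pair of stationary Markov policies
`(π₁, π₂)` with initial distribution `η`: `(1-β) ∑_t β^t η Q^t_{π₁,π₂}`. -/
noncomputable def occX {X A₁ A₂ : Type*} [MeasurableSpace X] [MeasurableSpace A₁]
    [MeasurableSpace A₂] (β : ℝ≥0) (Q : Kernel (X × A₁ × A₂) X)
    (π₁ : Kernel X A₁) (π₂ : Kernel X A₂) (η : Measure X) : Measure X :=
  Measure.sum fun t : ℕ => ((1 - β) * β ^ t) • (gstep Q π₁ π₂)^[t] η

/-- The occupation measure on `X × A₁ × A₂` of the pair of stationary Markov policies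
`(π₁, π₂)`: its `X`-marginal is `occX` and it disintegrates as
`μ(dy,da₁,da₂) = π₁(da₁|y) π₂(da₂|y) μ^X(dy)`. -/
noncomputable def occ {X A₁ A₂ : Type*} [MeasurableSpace X] [MeasurableSpace A₁]
    [MeasurableSpace A₂] (β : ℝ≥0) (Q : Kernel (X × A₁ × A₂) X)
    (π₁ : Kernel X A₁) (π₂ : Kernel X A₂) (η : Measure X) : Measure (X × A₁ × A₂) :=
  (occX β Q π₁ π₂ η) ⊗ₘ (π₁ ×ₖ π₂)

lemma gstep_ac {X A₁ A₂ : Type*} [MeasurableSpace X] [MeasurableSpace A₁]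
    [MeasurableSpace A₂] (Q : Kernel (X × A₁ × A₂) X) [IsMarkovKernel Q]
    (π₁ : Kernel X A₁) [IsMarkovKernel π₁] (π₂ : Kernel X A₂) [IsMarkovKernel π₂]
    {lam : Measure X} (hQ : ∀ p, Q p ≪ lam) (γ : Measure X) :
    gstep Q π₁ π₂ γ ≪ lam :=
  bind_ac' (gstep_fun_measurable Q π₁ π₂) fun x =>
    bind_ac' (Q.measurable.comp measurable_prodMk_left) fun _ => hQ _

lemma occX_ac {X A₁ A₂ : Type*} [MeasurableSpace X] [MeasurableSpace A₁]
    [MeasurableSpace A₂] (β : ℝ≥0) (Q : Kernel (X × A₁ × A₂) X)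
    (π₁ : Kernel X A₁) (π₂ : Kernel X A₂) (η : Measure X)
    {lam : Measure X} (h : ∀ t, (gstep Q π₁ π₂)^[t] η ≪ lam) :
    occX β Q π₁ π₂ η ≪ lam := by
  refine Measure.AbsolutelyContinuous.mk fun s hs h0 => ?_
  rw [occX, Measure.sum_apply _ hs]
  have hz : ∀ t : ℕ, (((1 - β) * β ^ t) • (gstep Q π₁ π₂)^[t] η) s = 0 := by
    intro t
    rw [Measure.smul_apply, h t h0, smul_zero]
  rw [tsum_congr hz, tsum_zero]

lemma gstep_congr {X A₁ A₂ : Type*} [MeasurableSpace X] [MeasurableSpace A₁]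
    [MeasurableSpace A₂] (Q : Kernel (X × A₁ × A₂) X)
    (π₁ π₁' : Kernel X A₁) [IsSFiniteKernel π₁] [IsSFiniteKernel π₁']
    (π₂ π₂' : Kernel X A₂) [IsSFiniteKernel π₂] [IsSFiniteKernel π₂']
    {lam γ : Measure X} (hγ : γ ≪ lam)
    (h1 : ∀ᵐ x ∂lam, π₁ x = π₁' x) (h2 : ∀ᵐ x ∂lam, π₂ x = π₂' x) :
    gstep Q π₁ π₂ γ = gstep Q π₁' π₂' γ := by
  refine bind_congr_ae' ?_
  filter_upwards [hγ.ae_le h1, hγ.ae_le h2] with x e1 e2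
  rw [Kernel.prod_apply, Kernel.prod_apply, e1, e2]

lemma iter_props {X A₁ A₂ : Type*} [MeasurableSpace X] [MeasurableSpace A₁]
    [MeasurableSpace A₂] (Q : Kernel (X × A₁ × A₂) X) [IsMarkovKernel Q]
    (π₁ π₁' : Kernel X A₁) [IsMarkovKernel π₁] [IsMarkovKernel π₁']
    (π₂ π₂' : Kernel X A₂) [IsMarkovKernel π₂] [IsMarkovKernel π₂']
    {lam η : Measure X} (hQ : ∀ p, Q p ≪ lam) (hη : η ≪ lam)
    (h1 : ∀ᵐ x ∂lam, π₁ x = π₁' x) (h2 : ∀ᵐ x ∂lam, π₂ x = π₂' x) :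
    ∀ t, (gstep Q π₁ π₂)^[t] η ≪ lam ∧
      (gstep Q π₁ π₂)^[t] η = (gstep Q π₁' π₂')^[t] η := by
  intro t
  induction t with
  | zero =>
    refine ⟨hη, ?_⟩
    simp only [Function.iterate_zero, id_eq]
  | succ n ih =>
    refine ⟨?_, ?_⟩
    · rw [Function.iterate_succ_apply']
      exact gstep_ac Q π₁ π₂ hQ _
    · rw [Function.iterate_succ_apply', Function.iterate_succ_apply', ← ih.2]
      exact gstep_congr Q π₁ π₁' π₂ π₂' ih.1 h1 h2

/-- If `η ≪ λ`, the transitions are absolutely continuous w.r.t. `λ`, and the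
stationary Markov policies satisfy `πᵢ(·|x) = πᵢ'(·|x)` for `λ`-a.e. `x` (`i = 1,2`), then the
occupation measures coincide: `μ_{η,π₁,π₂} = μ_{η,π₁',π₂'}`. -/
theorem stmt9 {X A₁ A₂ : Type*} [MeasurableSpace X]
    [MetricSpace A₁] [CompactSpace A₁] [MeasurableSpace A₁] [BorelSpace A₁]
    [MetricSpace A₂] [CompactSpace A₂] [MeasurableSpace A₂] [BorelSpace A₂]
    (β : ℝ≥0) (hβ0 : 0 < β) (hβ1 : β < 1)
    (lam η : Measure X) [IsProbabilityMeasure lam] [IsProbabilityMeasure η]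
    (Q : Kernel (X × A₁ × A₂) X) [IsMarkovKernel Q]
    (hQ : ∀ p, Q p ≪ lam)
    (π₁ π₁' : Kernel X A₁) [IsMarkovKernel π₁] [IsMarkovKernel π₁']
    (π₂ π₂' : Kernel X A₂) [IsMarkovKernel π₂] [IsMarkovKernel π₂']
    (hη : η ≪ lam)
    (h1 : ∀ᵐ x ∂lam, π₁ x = π₁' x) (h2 : ∀ᵐ x ∂lam, π₂ x = π₂' x) :
    occ β Q π₁ π₂ η = occ β Q π₁' π₂' η := by
  have hiter := iter_props Q π₁ π₁' π₂ π₂' hQ hη h1 h2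
  have hoccX : occX β Q π₁ π₂ η = occX β Q π₁' π₂' η :=
    congrArg Measure.sum (funext fun t => by rw [(hiter t).2])
  have hac : occX β Q π₁ π₂ η ≪ lam := occX_ac β Q π₁ π₂ η fun t => (hiter t).1
  unfold occ
  rw [← hoccX]
  refine Measure.compProd_congr ?_
  filter_upwards [hac.ae_le h1, hac.ae_le h2] with x e1 e2
  rw [Kernel.prod_apply, Kernel.prod_apply, e1, e2]
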